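/- Let Z : V → Z' be a Poisson variable (linear, Z Ω Z^T = 0) on a symplectic vector space V. Then Z is copyable: there exists a symplectic linear map g : V ⊕ V → V ⊕ V and an affine subspace (support of an epistemic state) R ⊆ V such that Z(g(v + x)₁) = Z(v) and Z(g(v + x)₂) = Z(v) for all v ∈ V and all x ∈ R, where subscripts denote the two V-components of the output. -/

import Mathlib

open Matrix

/-- The standard symplectic form matrix `[[0, 1], [-1, 0]]` on `(ι ⊕ ι) → K`. -/
def stdJ (K : Type*) [Field K] (ι : Type*) [Fintype ι] [DecidableEq ι] :
    Matrix (ι ⊕ ι) (ι ⊕ ι) K :=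
  Matrix.fromBlocks 0 1 (-1) 0

section AuxPoisson

variable {K : Type*} [Field K] {ι : Type*} [Fintype ι] [DecidableEq ι]

lemma dot_mulVec_mulVec {m p q : Type*} [Fintype m] [Fintype p] [Fintype q]
    (M : Matrix m p K) (N : Matrix m q K) (a : p → K) (b : q → K) :
    (M *ᵥ a) ⬝ᵥ (N *ᵥ b) = a ⬝ᵥ ((Mᵀ * N) *ᵥ b) := by
  conv_rhs => rw [Matrix.dotProduct_mulVec, ← Matrix.mulVec_transpose,
    Matrix.transpose_mul, Matrix.transpose_transpose]
  rw [Matrix.dotProduct_mulVec, ← Matrix.mulVec_transpose, Matrix.mulVec_mulVec]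

lemma dot_stdJ_mulVec (x : ι ⊕ ι → K) (y : ι ⊕ ι → K) :
    x ⬝ᵥ (stdJ K ι) *ᵥ y
      = (∑ i, x (Sum.inl i) * y (Sum.inr i)) - ∑ i, x (Sum.inr i) * y (Sum.inl i) := by
  simp [stdJ, dotProduct, Matrix.mulVec, Fintype.sum_sum_type, Matrix.one_apply,
    Finset.sum_ite_eq, sub_eq_add_neg, Finset.sum_neg_distrib]

lemma dot_stdJ_self (x : ι ⊕ ι → K) : x ⬝ᵥ (stdJ K ι) *ᵥ x = 0 := by
  rw [dot_stdJ_mulVec]; simp [mul_comm]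

lemma dot_stdJ_antisymm (x y : ι ⊕ ι → K) :
    x ⬝ᵥ (stdJ K ι) *ᵥ y = -(y ⬝ᵥ (stdJ K ι) *ᵥ x) := by
  rw [dot_stdJ_mulVec, dot_stdJ_mulVec]
  ring_nf
  simp [mul_comm]
  ring

lemma stdJ_transpose : (stdJ K ι)ᵀ = -(stdJ K ι) := by
  simp [stdJ, Matrix.fromBlocks_transpose, Matrix.fromBlocks_neg]

lemma stdJ_mul_self : stdJ K ι * stdJ K ι = -1 := by
  simp [stdJ, Matrix.fromBlocks_multiply]
  rw [← Matrix.fromBlocks_one, Matrix.fromBlocks_neg]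
  simp

lemma stdJ_mulVecLin_injective :
    Function.Injective (stdJ K ι).mulVecLin := by
  intro x y h
  simp only [mulVecLin_apply] at h
  have h2 := congrArg (fun v => (stdJ K ι) *ᵥ v) h
  simp only [Matrix.mulVec_mulVec, stdJ_mul_self] at h2
  simpa [Matrix.neg_mulVec] using h2


lemma mul2_tail {a b c p : Type*} [Fintype b] [Fintype c]
    {M1 : Matrix a b K} {M2 : Matrix b c K} {N : Matrix a c K}
    (h : M1 * M2 = N) (X : Matrix c p K) : M1 * (M2 * X) = N * X := by
  rw [← Matrix.mul_assoc, h]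

lemma mul3_tail {a b c d p : Type*} [Fintype b] [Fintype c] [Fintype d]
    {M1 : Matrix a b K} {M2 : Matrix b c K} {M3 : Matrix c d K} {N : Matrix a d K}
    (h : M1 * M2 * M3 = N) (X : Matrix d p K) : M1 * (M2 * (M3 * X)) = N * X := by
  rw [← Matrix.mul_assoc, ← Matrix.mul_assoc, h]

lemma pairing_entry {m : Type*} [Fintype m] {r : ℕ} (J : Matrix m m K)
    (f g : Fin r → m → K) (i j : Fin r) :
    ((Matrix.of fun a k => f k a)ᵀ * J * (Matrix.of fun a k => g k a)) i j
      = f i ⬝ᵥ (J *ᵥ g j) := by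
  simp only [Matrix.mul_apply, Matrix.transpose_apply, Matrix.of_apply, dotProduct,
    Matrix.mulVec, Finset.sum_mul, Finset.mul_sum, mul_assoc, dotProduct]
  rw [Finset.sum_comm]

section
variable {n : ℕ} {κ : Type*} [Fintype κ] [DecidableEq κ]

theorem exists_P (Z : Matrix κ (Fin n ⊕ Fin n) K)
    (hZ : Z * stdJ K (Fin n) * Zᵀ = 0) :
    ∃ P : Matrix (Fin n ⊕ Fin n) (Fin n ⊕ Fin n) K,
      Z * P = Z ∧ Pᵀ * stdJ K (Fin n) * P = 0 ∧ P * stdJ K (Fin n) * Pᵀ = 0 := by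
  set J := stdJ K (Fin n) with hJdef
  set W' : Submodule K ((Fin n ⊕ Fin n) → K) := LinearMap.range (J * Zᵀ).mulVecLin with hW'
  set r := Module.finrank K W' with hr
  set b : Module.Basis (Fin r) K W' := Module.finBasis K W' with hb
  set u : Fin r → ((Fin n ⊕ Fin n) → K) := fun j => (b j : (Fin n ⊕ Fin n) → K) with hu
  -- the map sending coordinates to J *ᵥ (∑ cᵢ • u i)
  set ymap : (Fin r → K) →ₗ[K] ((Fin n ⊕ Fin n) → K) :=
    (J.mulVecLin.comp W'.subtype).comp (b.equivFun.symm : (Fin r → K) ≃ₗ[K] W').toLinearMap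
    with hymap
  have hymap_single : ∀ j, ymap (Pi.single j 1) = J *ᵥ u j := by
    intro j
    simp only [hymap, LinearMap.comp_apply, LinearEquiv.coe_coe, mulVecLin_apply,
      Submodule.coe_subtype]
    congr 1
    have : b.equivFun.symm (Pi.single j 1) = b j := by
      rw [Module.Basis.equivFun_symm_apply]
      simp [Pi.single_apply]
    rw [this]
  have hymap_inj : Function.Injective ymap := by
    apply Function.Injective.comp (Function.Injective.comp stdJ_mulVecLin_injective
      (Submodule.injective_subtype W'))
    exact b.equivFun.symm.injective
  obtain ⟨g, hg⟩ := ymap.exists_leftInverse_of_injective (LinearMap.ker_eq_bot.mpr hymap_inj)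
  set w0 : Fin r → ((Fin n ⊕ Fin n) → K) := fun i a => g (Pi.single a 1) i with hw0def
  have hw0 : ∀ (x : (Fin n ⊕ Fin n) → K) i, w0 i ⬝ᵥ x = g x i := by
    intro x i
    have hx : x = ∑ a, x a • (Pi.single a (1:K) : (Fin n ⊕ Fin n) → K) := by
      funext j; simp [Pi.single_apply]
    calc w0 i ⬝ᵥ x = ∑ a, x a * g (Pi.single a 1) i := by
          simp [hw0def, dotProduct, mul_comm]
      _ = g x i := by
          conv_rhs => rw [hx]
          rw [map_sum]
          simp [LinearMap.map_smul]
  have hw0y : ∀ i j, w0 i ⬝ᵥ (J *ᵥ u j) = if i = j then 1 else 0 := by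
    intro i j
    rw [← hymap_single, hw0 _ i]
    have := congrArg (fun f => f (Pi.single j 1) i) hg
    simp only [LinearMap.comp_apply, LinearMap.id_apply] at this
    rw [this, Pi.single_apply]
  -- isotropy of the u family
  have hu_mem : ∀ j, ∃ cc, (J * Zᵀ) *ᵥ cc = u j := fun j => (b j).2
  choose c hc using hu_mem
  have hJT : Jᵀ = -J := stdJ_transpose
  have hJJ : J * J = -1 := stdJ_mul_self
  have hQ : (J * Zᵀ)ᵀ * (J * (J * Zᵀ)) = 0 := by
    rw [Matrix.transpose_mul, Matrix.transpose_transpose, hJT, ← Matrix.mul_assoc J J, hJJ]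
    simpa [Matrix.mul_assoc] using hZ
  have huu : ∀ i j, u i ⬝ᵥ (J *ᵥ u j) = 0 := by
    intro i j
    rw [← hc i, ← hc j, Matrix.mulVec_mulVec, dot_mulVec_mulVec, hQ]
    simp
  have hAnti : ∀ x y : (Fin n ⊕ Fin n) → K, x ⬝ᵥ J *ᵥ y = -(y ⬝ᵥ J *ᵥ x) :=
    fun x y => dot_stdJ_antisymm x y
  have hAlt : ∀ x : (Fin n ⊕ Fin n) → K, x ⬝ᵥ J *ᵥ x = 0 := fun x => dot_stdJ_self x
  set A : Fin r → Fin r → K := fun i k => w0 i ⬝ᵥ (J *ᵥ w0 k) with hA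
  set co : Fin r → Fin r → K := fun i k => if k < i then -(A i k) else 0 with hco
  set w : Fin r → ((Fin n ⊕ Fin n) → K) := fun i => w0 i - ∑ k, co i k • u k with hwdef
  have h1 : ∀ (x : (Fin n ⊕ Fin n) → K) j,
      (w j) ⬝ᵥ (J *ᵥ x) = w0 j ⬝ᵥ (J *ᵥ x) - ∑ k, co j k * (u k ⬝ᵥ (J *ᵥ x)) := by
    intro x j
    simp only [hwdef, sub_dotProduct]
    congr 1
    simp only [dotProduct, Finset.sum_apply, Pi.smul_apply, smul_eq_mul, Finset.sum_mul,
      Finset.mul_sum, mul_assoc]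
    rw [Finset.sum_comm]
  have hwu : ∀ i j, w i ⬝ᵥ (J *ᵥ u j) = if i = j then 1 else 0 := by
    intro i j
    rw [h1, hw0y]
    simp [huu]
  have hww : ∀ i j, w i ⬝ᵥ (J *ᵥ w j) = 0 := by
    intro i j
    rw [h1]
    have e2 : ∀ k, u k ⬝ᵥ (J *ᵥ w j) = -(if j = k then 1 else 0) := by
      intro k; rw [hAnti, hwu]
    have e1 : w0 i ⬝ᵥ (J *ᵥ w j) = A i j - co j i := by
      rw [hAnti, h1]
      have e3 : ∀ l, u l ⬝ᵥ (J *ᵥ w0 i) = -(if i = l then 1 else 0) := by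
        intro l; rw [hAnti, hw0y]
      have e4 : w0 j ⬝ᵥ (J *ᵥ w0 i) = -(A i j) := by
        rw [hAnti]
      simp only [e3, e4]
      simp [Finset.sum_ite_eq]
      ring
    rw [e1]
    simp only [e2]
    simp [Finset.sum_ite_eq]
    rcases lt_trichotomy i j with h|h|h
    · have c1 : co i j = 0 := by simp [hco, not_lt.mpr h.le]
      have c2 : co j i = -(A j i) := by simp [hco, h]
      have c3 : A j i = -(A i j) := by rw [hA]; exact hAnti _ _
      rw [c1, c2, c3]; ring
    · subst h
      have c1 : co i i = 0 := by simp [hco]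
      have c2 : A i i = 0 := hAlt _
      rw [c1, c2]; ring
    · have c1 : co j i = 0 := by simp [hco, not_lt.mpr h.le]
      have c2 : co i j = -(A i j) := by simp [hco, h]
      rw [c1, c2]; ring
  -- matrices
  set Umat : Matrix (Fin n ⊕ Fin n) (Fin r) K := Matrix.of fun a j => u j a with hUmat
  set Wmat : Matrix (Fin n ⊕ Fin n) (Fin r) K := Matrix.of fun a j => w j a with hWmat
  have R1 : Wmatᵀ * J * Umat = 1 := by
    ext i j
    rw [hUmat, hWmat, pairing_entry, hwu, Matrix.one_apply]
  have R2 : Wmatᵀ * J * Wmat = 0 := by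
    ext i j
    rw [hWmat, pairing_entry, hww]
    simp
  have R3m : Umatᵀ * J * Umat = 0 := by
    ext i j
    rw [hUmat, pairing_entry, huu]
    simp
  have hcolmem : ∀ e, (fun a => (J * Zᵀ) a e) ∈ W' := by
    intro e
    refine ⟨Pi.single e 1, ?_⟩
    funext a
    simp [Matrix.mulVecLin_apply, Matrix.mulVec_single, Matrix.mulVec, Matrix.mul_apply,
      dotProduct, Matrix.transpose_apply]
  set D : Matrix (Fin r) κ K := Matrix.of fun jj e => b.repr ⟨_, hcolmem e⟩ jj with hD
  have R5 : Umat * D = J * Zᵀ := by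
    ext a e
    have h2 := congrArg (fun s : W' => (s : (Fin n ⊕ Fin n) → K) a)
      (b.sum_repr ⟨_, hcolmem e⟩)
    simp only at h2
    rw [Matrix.mul_apply]
    rw [← h2]
    simp only [hUmat, hD, Matrix.of_apply, AddSubmonoidClass.coe_finset_sum,
      SetLike.val_smul, Finset.sum_apply, Pi.smul_apply, smul_eq_mul, mul_comm]
    rfl
  -- the projection-like matrix
  refine ⟨Wmat * (Umatᵀ * Jᵀ), ?_, ?_, ?_⟩
  · -- Z * P = Z
    have hUJW : Umatᵀ * Jᵀ * Wmat = 1 := by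
      have t := congrArg Matrix.transpose R1
      simp only [Matrix.transpose_mul, Matrix.transpose_transpose, Matrix.transpose_one] at t
      rw [← Matrix.mul_assoc] at t
      exact t
    have hJTJT : Jᵀ * Jᵀ = -1 := by rw [hJT]; simp [hJJ]
    have hZfact : Z = -(Dᵀ * (Umatᵀ * Jᵀ)) := by
      have ht := congrArg Matrix.transpose R5
      simp only [Matrix.transpose_mul] at ht
      -- ht : Dᵀ * Umatᵀ = Z * Jᵀ  (transpose of J*Zᵀ is Z*Jᵀ? (J*Zᵀ)ᵀ = Z*Jᵀ)
      have h3 := congrArg (fun M => M * Jᵀ) ht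
      simp only [Matrix.mul_assoc, Matrix.transpose_transpose, hJTJT, Matrix.mul_neg,
        Matrix.mul_one] at h3
      rw [h3, neg_neg]
    calc Z * (Wmat * (Umatᵀ * Jᵀ))
        = -(Dᵀ * (Umatᵀ * (Jᵀ * (Wmat * (Umatᵀ * Jᵀ))))) := by
          rw [hZfact]; simp only [Matrix.neg_mul, Matrix.mul_assoc]
      _ = -(Dᵀ * (Umatᵀ * Jᵀ)) := by rw [mul3_tail hUJW, Matrix.one_mul]
      _ = Z := hZfact.symm
  · -- Pᵀ J P = 0
    have hPt : (Wmat * (Umatᵀ * Jᵀ))ᵀ = J * (Umat * Wmatᵀ) := by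
      simp [Matrix.transpose_mul, Matrix.mul_assoc, hJT]
    rw [hPt]
    calc J * (Umat * Wmatᵀ) * J * (Wmat * (Umatᵀ * Jᵀ))
        = J * (Umat * (Wmatᵀ * (J * (Wmat * (Umatᵀ * Jᵀ))))) := by
          simp only [Matrix.mul_assoc]
      _ = 0 := by rw [mul3_tail R2, Matrix.zero_mul, Matrix.mul_zero, Matrix.mul_zero]
  · -- P J Pᵀ = 0
    have hPt : (Wmat * (Umatᵀ * Jᵀ))ᵀ = J * (Umat * Wmatᵀ) := by
      simp [Matrix.transpose_mul, Matrix.mul_assoc, hJT]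
    rw [hPt]
    have hJ3 : Jᵀ * J * J = J := by rw [hJT]; simp [Matrix.mul_assoc, mul2_tail hJJ]
    calc Wmat * (Umatᵀ * Jᵀ) * J * (J * (Umat * Wmatᵀ))
        = Wmat * (Umatᵀ * (Jᵀ * (J * (J * (Umat * Wmatᵀ))))) := by
          simp only [Matrix.mul_assoc]
      _ = Wmat * (Umatᵀ * (J * (Umat * Wmatᵀ))) := by rw [mul3_tail hJ3]
      _ = 0 := by rw [mul3_tail R3m, Matrix.zero_mul, Matrix.mul_zero]
end

end AuxPoisson

/-- Every Poisson variable `Z` (linear with `Z Ω Zᵀ = 0`) is copyable: there is a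
symplectic linear map `g` on `V ⊕ V` and the support of an epistemic state `(U, a)`
of `V` such that both output components of `g` applied to `v` plus any ancilla ready
state carry the value `Z v`. -/
theorem poisson_variable_is_copyable {K : Type*} [Field K] {n : ℕ}
    {κ : Type*} [Fintype κ] [DecidableEq κ]
    (Z : Matrix κ (Fin n ⊕ Fin n) K)
    (hZ : Z * stdJ K (Fin n) * Zᵀ = 0) :
    ∃ G : Matrix ((Fin n ⊕ Fin n) ⊕ (Fin n ⊕ Fin n))
        ((Fin n ⊕ Fin n) ⊕ (Fin n ⊕ Fin n)) K,
      Gᵀ * Matrix.fromBlocks (stdJ K (Fin n)) 0 0 (stdJ K (Fin n)) * G =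
          Matrix.fromBlocks (stdJ K (Fin n)) 0 0 (stdJ K (Fin n)) ∧
      ∃ (U : Submodule K ((Fin n ⊕ Fin n) → K)) (a : (Fin n ⊕ Fin n) → K),
        (∀ x ∈ U, ∀ y ∈ U, x ⬝ᵥ (stdJ K (Fin n)).mulVec y = 0) ∧
        ∀ (v x : (Fin n ⊕ Fin n) → K), (∀ u ∈ U, u ⬝ᵥ x = u ⬝ᵥ a) →
          Z.mulVec ((G.mulVec (Sum.elim v x)) ∘ Sum.inl) = Z.mulVec v ∧
          Z.mulVec ((G.mulVec (Sum.elim v x)) ∘ Sum.inr) = Z.mulVec v := by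
  obtain ⟨P, key1, key2, key3⟩ := exists_P Z hZ
  set J := stdJ K (Fin n) with hJdef
  have hJT : Jᵀ = -J := stdJ_transpose
  have hJJ : J * J = -1 := stdJ_mul_self
  have hJTJ : Jᵀ * J = 1 := by rw [hJT]; simp [hJJ]
  have hJJT : J * Jᵀ = 1 := by rw [hJT]; simp [hJJ]
  set B : Matrix (Fin n ⊕ Fin n) (Fin n ⊕ Fin n) K := J * (Pᵀ * J) with hB
  have hBt : Bᵀ = Jᵀ * (P * Jᵀ) := by
    rw [hB, Matrix.transpose_mul, Matrix.transpose_mul, Matrix.transpose_transpose,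
      Matrix.mul_assoc]
  have hPtZt : Pᵀ * Zᵀ = Zᵀ := by
    have := congrArg Matrix.transpose key1
    simpa [Matrix.transpose_mul] using this
  refine ⟨Matrix.fromBlocks 1 B P 1, ?_, ?_⟩
  · rw [Matrix.fromBlocks_transpose, Matrix.fromBlocks_multiply, Matrix.fromBlocks_multiply]
    rw [Matrix.fromBlocks_inj]
    have hBtJ : Bᵀ * J = Jᵀ * P := by
      rw [hBt, Matrix.mul_assoc, Matrix.mul_assoc, hJTJ, Matrix.mul_one]
    refine ⟨?_, ?_, ?_, ?_⟩
    · -- block 11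
      simp only [Matrix.transpose_one, Matrix.one_mul, Matrix.mul_zero, Matrix.mul_one,
        add_zero, zero_add]
      rw [key2, add_zero]
    · simp only [Matrix.transpose_one, Matrix.one_mul, Matrix.mul_zero, Matrix.mul_one,
        add_zero, zero_add]
      -- J * B + Pᵀ * J = 0
      rw [hB, ← Matrix.mul_assoc, hJJ, Matrix.neg_mul, Matrix.one_mul, neg_add_cancel]
    · -- Bᵀ * J + J * P = 0
      simp only [Matrix.transpose_one, Matrix.one_mul, Matrix.mul_zero, Matrix.mul_one,
        add_zero, zero_add]
      rw [hBtJ, hJT, Matrix.neg_mul, neg_add_cancel]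
    · -- Bᵀ * J * B + J = J
      simp only [Matrix.transpose_one, Matrix.one_mul, Matrix.mul_zero, Matrix.mul_one,
        add_zero, zero_add]
      rw [hBtJ, hB, hJT]
      simp only [Matrix.mul_assoc]
      rw [mul3_tail key3]
      simp
  · set M0 := Matrix.fromRows Z (Z * B) with hM0
    have hzb : (Z * B)ᵀ = Jᵀ * (P * (Jᵀ * Zᵀ)) := by
      rw [Matrix.transpose_mul, hBt, Matrix.mul_assoc, Matrix.mul_assoc]
    have z1 : Z * (J * Zᵀ) = 0 := by rw [← Matrix.mul_assoc]; exact hZ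
    have z2 : Z * (J * (Z * B)ᵀ) = 0 := by
      rw [hzb, mul2_tail hJJT, Matrix.one_mul, mul2_tail key1, hJT, Matrix.neg_mul,
        Matrix.mul_neg, z1, neg_zero]
    have z3 : (Z * B) * (J * Zᵀ) = 0 := by
      simp only [hB, Matrix.mul_assoc]
      rw [mul2_tail hJJ]
      rw [Matrix.neg_mul, Matrix.one_mul]
      rw [Matrix.mul_neg, hPtZt]
      simp [z1]
    have z4 : (Z * B) * (J * (Z * B)ᵀ) = 0 := by
      rw [hzb, hB]
      simp only [Matrix.mul_assoc]
      rw [mul2_tail hJJT, Matrix.one_mul, mul3_tail key2, Matrix.zero_mul, Matrix.mul_zero,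
        Matrix.mul_zero]
    have hM0JM0t : M0 * (J * M0ᵀ) = 0 := by
      rw [hM0, Matrix.transpose_fromRows, Matrix.mul_fromCols,
        Matrix.fromRows_mul_fromCols, z1, z2, z3, z4]
      exact Matrix.fromBlocks_zero
    refine ⟨LinearMap.range (M0ᵀ.mulVecLin), 0, ?_, ?_⟩
    · rintro x ⟨cx, rfl⟩ y ⟨cy, rfl⟩
      simp only [Matrix.mulVecLin_apply]
      rw [Matrix.mulVec_mulVec, dot_mulVec_mulVec, Matrix.transpose_transpose]
      rw [hM0JM0t]
      simp
    · intro v x hx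
      have hrow1 : ∀ e : κ, Z e = M0ᵀ *ᵥ Pi.single (Sum.inl e) 1 := by
        intro e; funext a
        simp [hM0, Matrix.mulVec_single, Matrix.transpose_apply, Matrix.fromRows_apply_inl]
      have hrow2 : ∀ e : κ, (Z * B) e = M0ᵀ *ᵥ Pi.single (Sum.inr e) 1 := by
        intro e; funext a
        simp [hM0, Matrix.mulVec_single, Matrix.transpose_apply, Matrix.fromRows_apply_inr]
      have hZx : Z *ᵥ x = 0 := by
        funext e
        have h := hx (Z e) ⟨Pi.single (Sum.inl e) 1, (hrow1 e).symm⟩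
        exact (by simpa using h : Z e ⬝ᵥ x = 0)
      have hZBx : (Z * B) *ᵥ x = 0 := by
        funext e
        have h := hx ((Z * B) e) ⟨Pi.single (Sum.inr e) 1, (hrow2 e).symm⟩
        exact (by simpa using h : (Z * B) e ⬝ᵥ x = 0)
      rw [Matrix.fromBlocks_mulVec]
      simp only [Sum.elim_comp_inl, Sum.elim_comp_inr, Sum.elim_inl, Sum.elim_inr,
        Matrix.one_mulVec]
      constructor
      · rw [Matrix.mulVec_add, Matrix.mulVec_mulVec, hZBx]
        simp
      · rw [Matrix.mulVec_add, Matrix.mulVec_mulVec, hZx, key1, add_zero]
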